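/- Gap Sparse Vector Technique (with N = 1) is ε-differentially private: let n ≥ 1, ε > 0, T : ℝ. Let Lap(2/ε) be the Borel measure on ℝ with density x ↦ (ε/4)·exp(−(ε/2)·|x|) and Lap(4/ε) the Borel measure on ℝ with density x ↦ (ε/8)·exp(−(ε/4)·|x|), both with respect to Lebesgue measure, and let μ be the product measure of Lap(2/ε) with n independent copies of Lap(4/ε) on ℝ × (Fin n → ℝ). For q : Fin n → ℝ, j : Fin n, and a measurable set G ⊆ ℝ, define GapAT(q, j, G) := {(z, η) | (∀ i, i < j → q i + η i < T + z) ∧ q j + η j ≥ T + z ∧ (q j + η j − (T + z)) ∈ G}. Then for all q₁, q₂ : Fin n → ℝ with |q₁ i − q₂ i| ≤ 1 for every i, every j : Fin n, and every measurable G ⊆ ℝ, μ(GapAT(q₁, j, G)) ≤ exp(ε) · μ(GapAT(q₂, j, G)). -/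
import Mathlib

open MeasureTheory ENNReal

lemma laplace_shift (a k c : ℝ) (ha : 0 ≤ a) (hk : 0 ≤ k) {g : ℝ → ℝ≥0∞} (hg : Measurable g) :
    ∫⁻ x, g (x + c) ∂(volume.withDensity fun x => ENNReal.ofReal (a * Real.exp (-k * |x|))) ≤
      ENNReal.ofReal (Real.exp (k * |c|)) *
        ∫⁻ x, g x ∂(volume.withDensity fun x => ENNReal.ofReal (a * Real.exp (-k * |x|))) := by
  set f : ℝ → ℝ≥0∞ := fun x => ENNReal.ofReal (a * Real.exp (-k * |x|)) with hf_def
  have hf : Measurable f := by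
    apply Measurable.ennreal_ofReal
    exact measurable_const.mul ((measurable_id.abs.const_mul (-k)).exp)
  have hgc : Measurable fun x : ℝ => g (x + c) := hg.comp (measurable_id.add_const c)
  rw [lintegral_withDensity_eq_lintegral_mul _ hf hgc,
    lintegral_withDensity_eq_lintegral_mul _ hf hg]
  have hchange : ∫⁻ x, (f * fun x => g (x + c)) x = ∫⁻ x, f (x - c) * g x := by
    have := lintegral_add_right_eq_self (μ := volume) (fun x => f (x - c) * g x) c
    rw [← this]
    simp [add_sub_cancel_right]
  rw [hchange]
  have hpoint : ∀ x, f (x - c) * g x ≤ ENNReal.ofReal (Real.exp (k * |c|)) * ((f * g) x) := by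
    intro x
    simp only [Pi.mul_apply, ← mul_assoc]
    apply mul_le_mul_left
    simp only [hf_def]
    rw [← ENNReal.ofReal_mul (Real.exp_nonneg _)]
    apply ENNReal.ofReal_le_ofReal
    have habs : |x| ≤ |x - c| + |c| := by
      calc |x| = |(x - c) + c| := by ring_nf
      _ ≤ |x - c| + |c| := abs_add_le _ _
    have hexp : Real.exp (-k * |x - c|) ≤ Real.exp (k * |c|) * Real.exp (-k * |x|) := by
      rw [← Real.exp_add]
      apply Real.exp_le_exp.2
      nlinarith [mul_le_mul_of_nonneg_left habs hk]
    calc a * Real.exp (-k * |x - c|) ≤ a * (Real.exp (k * |c|) * Real.exp (-k * |x|)) :=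
          mul_le_mul_of_nonneg_left hexp ha
      _ = Real.exp (k * |c|) * (a * Real.exp (-k * |x|)) := by ring
  calc ∫⁻ x, f (x - c) * g x ≤ ∫⁻ x, ENNReal.ofReal (Real.exp (k * |c|)) * ((f * g) x) :=
        lintegral_mono hpoint
    _ = ENNReal.ofReal (Real.exp (k * |c|)) * ∫⁻ x, (f * g) x :=
        lintegral_const_mul' _ _ ENNReal.ofReal_ne_top

lemma pi_shift {m : ℕ} (a k c : ℝ) (ha : 0 ≤ a) (hk : 0 ≤ k) (j : Fin (m + 1))
    {B : Set (Fin (m + 1) → ℝ)} (hB : MeasurableSet B) :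
    Measure.pi (fun _ : Fin (m+1) => volume.withDensity
        fun x => ENNReal.ofReal (a * Real.exp (-k * |x|)))
        {η | Function.update η j (η j + c) ∈ B} ≤
      ENNReal.ofReal (Real.exp (k * |c|)) *
        Measure.pi (fun _ : Fin (m+1) => volume.withDensity
          fun x => ENNReal.ofReal (a * Real.exp (-k * |x|))) B := by
  set ν : Measure ℝ := volume.withDensity fun x => ENNReal.ofReal (a * Real.exp (-k * |x|))
    with hν_def
  set Pm : Measure (Fin (m+1) → ℝ) := Measure.pi fun _ => ν
  set ρ : Measure (Fin m → ℝ) := Measure.pi fun _ => ν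
  let e := MeasurableEquiv.piFinSuccAbove (fun _ : Fin (m+1) => ℝ) j
  have hmp : MeasurePreserving e Pm (ν.prod ρ) :=
    measurePreserving_piFinSuccAbove (fun _ : Fin (m+1) => ν) j
  set B' : Set (ℝ × (Fin m → ℝ)) := e.symm ⁻¹' B with hB'_def
  have hB' : MeasurableSet B' := e.symm.measurable hB
  have hBe : B = e ⁻¹' B' := by
    ext η; simp [hB'_def]
  have he_apply : ∀ η : Fin (m+1) → ℝ, e η = (η j, fun i => η (j.succAbove i)) := fun η => rfl
  set Gm : ℝ × (Fin m → ℝ) → ℝ × (Fin m → ℝ) := fun p => (p.1 + c, p.2) with hGm_def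
  have hGmmeas : Measurable Gm := (measurable_fst.add_const c).prodMk measurable_snd
  have hSe : {η | Function.update η j (η j + c) ∈ B} = e ⁻¹' (Gm ⁻¹' B') := by
    conv_lhs => rw [hBe]
    ext η
    simp only [Set.mem_setOf_eq, Set.mem_preimage, he_apply, hGm_def]
    have h1 : Function.update η j (η j + c) j = η j + c := Function.update_self _ _ _
    have h2 : ∀ i : Fin m, Function.update η j (η j + c) (j.succAbove i) = η (j.succAbove i) :=
      fun i => Function.update_of_ne (Fin.succAbove_ne j i) _ _
    rw [show ((fun i => Function.update η j (η j + c) (j.succAbove i)) : Fin m → ℝ)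
        = fun i => η (j.succAbove i) from funext h2, h1]
  rw [hSe, hBe]
  rw [hmp.measure_preimage_equiv, hmp.measure_preimage_equiv]
  rw [Measure.prod_apply (hGmmeas hB'), Measure.prod_apply hB']
  have hsec : ∀ x : ℝ, Prod.mk x ⁻¹' (Gm ⁻¹' B') = Prod.mk (x + c) ⁻¹' B' := by
    intro x; ext y; simp [hGm_def]
  have hmeas_h : Measurable fun x : ℝ => ρ (Prod.mk x ⁻¹' B') :=
    measurable_measure_prodMk_left hB'
  calc ∫⁻ x, ρ (Prod.mk x ⁻¹' (Gm ⁻¹' B')) ∂ν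
      = ∫⁻ x, ρ (Prod.mk (x + c) ⁻¹' B') ∂ν := by simp_rw [hsec]
    _ ≤ ENNReal.ofReal (Real.exp (k * |c|)) * ∫⁻ x, ρ (Prod.mk x ⁻¹' B') ∂ν :=
        laplace_shift a k c ha hk hmeas_h

/-- Gap Sparse Vector Technique (with `N = 1`) is `ε`-differentially private. -/
theorem gap_svt_dp (n : ℕ) (hn : 1 ≤ n) (ε : ℝ) (hε : 0 < ε) (T : ℝ)
    (μ : Measure (ℝ × (Fin n → ℝ)))
    (hμ : μ = (volume.withDensity
        (fun x => ENNReal.ofReal ((ε / 4) * Real.exp (-(ε / 2) * |x|)))).prod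
      (Measure.pi (fun _ : Fin n => volume.withDensity
        (fun x => ENNReal.ofReal ((ε / 8) * Real.exp (-(ε / 4) * |x|))))))
    (GapAT : (Fin n → ℝ) → Fin n → Set ℝ → Set (ℝ × (Fin n → ℝ)))
    (hGapAT : ∀ q j G, GapAT q j G = {p : ℝ × (Fin n → ℝ) |
      (∀ i, i < j → q i + p.2 i < T + p.1) ∧ q j + p.2 j ≥ T + p.1 ∧
        (q j + p.2 j - (T + p.1)) ∈ G})
    (q₁ q₂ : Fin n → ℝ) (hadj : ∀ i, |q₁ i - q₂ i| ≤ 1) (j : Fin n)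
    (G : Set ℝ) (hG : MeasurableSet G) :
    μ (GapAT q₁ j G) ≤ ENNReal.ofReal (Real.exp ε) * μ (GapAT q₂ j G) := by
  obtain ⟨m, rfl⟩ : ∃ m, n = m + 1 := ⟨n - 1, by omega⟩
  subst hμ
  set ν₂ : Measure ℝ := volume.withDensity
    (fun x => ENNReal.ofReal ((ε / 4) * Real.exp (-(ε / 2) * |x|))) with hν₂_def
  set Pm : Measure (Fin (m+1) → ℝ) := Measure.pi (fun _ : Fin (m+1) => volume.withDensity
    (fun x => ENNReal.ofReal ((ε / 8) * Real.exp (-(ε / 4) * |x|)))) with hPm_def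
  set c : ℝ := q₁ j - q₂ j + 1 with hc_def
  have hcabs : |c| ≤ 2 := by
    have h := hadj j
    rw [abs_le] at h ⊢
    constructor <;> [linarith [h.1]; linarith [h.2]]
  rw [hGapAT, hGapAT]
  set A₂ : Set (ℝ × (Fin (m+1) → ℝ)) := {p : ℝ × (Fin (m+1) → ℝ) |
      (∀ i, i < j → q₂ i + p.2 i < T + p.1) ∧ q₂ j + p.2 j ≥ T + p.1 ∧
        (q₂ j + p.2 j - (T + p.1)) ∈ G} with hA₂_def
  -- measurability of A₂
  have hm1 : MeasurableSet {p : ℝ × (Fin (m+1) → ℝ) | ∀ i, i < j → q₂ i + p.2 i < T + p.1} := by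
    have heq : {p : ℝ × (Fin (m+1) → ℝ) | ∀ i, i < j → q₂ i + p.2 i < T + p.1} =
        ⋂ i, ⋂ (_ : i < j), {p : ℝ × (Fin (m+1) → ℝ) | q₂ i + p.2 i < T + p.1} := by
      ext p; simp
    rw [heq]
    exact MeasurableSet.iInter fun i => MeasurableSet.iInter fun _ =>
      measurableSet_lt (by fun_prop) (by fun_prop)
  have hm2 : MeasurableSet {p : ℝ × (Fin (m+1) → ℝ) | q₂ j + p.2 j ≥ T + p.1} :=
    measurableSet_le (by fun_prop) (by fun_prop)
  have hm3 : MeasurableSet {p : ℝ × (Fin (m+1) → ℝ) | q₂ j + p.2 j - (T + p.1) ∈ G} := by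
    have hf : Measurable fun p : ℝ × (Fin (m+1) → ℝ) => q₂ j + p.2 j - (T + p.1) := by fun_prop
    exact hf hG
  have hA₂ : MeasurableSet A₂ := hm1.inter (hm2.inter hm3)
  -- the shift map
  have hupd : Measurable fun p : ℝ × (Fin (m+1) → ℝ) =>
      Function.update p.2 j (p.2 j + c) := by
    apply measurable_pi_iff.2
    intro i
    by_cases hij : i = j
    · subst hij
      simp only [Function.update_self]
      fun_prop
    · simp only [Function.update_of_ne hij]
      fun_prop
  set Φ : ℝ × (Fin (m+1) → ℝ) → ℝ × (Fin (m+1) → ℝ) :=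
    fun p => (p.1 + 1, Function.update p.2 j (p.2 j + c)) with hΦ_def
  have hΦmeas : Measurable Φ := (measurable_fst.add_const 1).prodMk hupd
  -- inclusion
  have hincl : {p : ℝ × (Fin (m+1) → ℝ) |
      (∀ i, i < j → q₁ i + p.2 i < T + p.1) ∧ q₁ j + p.2 j ≥ T + p.1 ∧
        (q₁ j + p.2 j - (T + p.1)) ∈ G} ⊆ Φ ⁻¹' A₂ := by
    rintro ⟨z, η⟩ ⟨h1, h2, h3⟩
    refine ⟨fun i hij => ?_, ?_, ?_⟩
    · have hne : i ≠ j := ne_of_lt hij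
      simp only [hΦ_def, Function.update_of_ne hne]
      have ha := hadj i
      rw [abs_le] at ha
      have hlt := h1 i hij
      simp only at hlt ⊢
      linarith [ha.2]
    · simp only [hΦ_def, Function.update_self]
      simp only at h2 ⊢
      rw [hc_def]
      linarith
    · simp only [hΦ_def, Function.update_self]
      simp only at h3 ⊢
      have heq : q₂ j + (η j + c) - (T + (z + 1)) = q₁ j + η j - (T + z) := by
        rw [hc_def]; ring
      rw [heq]
      exact h3
  -- main computation
  have hsfin : SFinite Pm := by rw [hPm_def]; infer_instance
  have hmeas_h : Measurable fun t : ℝ => Pm (Prod.mk t ⁻¹' A₂) :=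
    measurable_measure_prodMk_left hA₂
  have step1 : (ν₂.prod Pm) (Φ ⁻¹' A₂) ≤ ENNReal.ofReal (Real.exp ((ε/4) * |c|)) *
      ∫⁻ t, Pm (Prod.mk (t + 1) ⁻¹' A₂) ∂ν₂ := by
    rw [Measure.prod_apply (hΦmeas hA₂)]
    have hpt : ∀ z : ℝ, Pm (Prod.mk z ⁻¹' (Φ ⁻¹' A₂)) ≤
        ENNReal.ofReal (Real.exp ((ε/4) * |c|)) * Pm (Prod.mk (z + 1) ⁻¹' A₂) := by
      intro z
      have hsec : Prod.mk z ⁻¹' (Φ ⁻¹' A₂) =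
          {η : Fin (m+1) → ℝ | Function.update η j (η j + c) ∈ Prod.mk (z + 1) ⁻¹' A₂} := rfl
      rw [hsec, hPm_def]
      exact pi_shift (ε/8) (ε/4) c (by positivity) (by positivity) j
        (measurable_prodMk_left hA₂)
    calc ∫⁻ z, Pm (Prod.mk z ⁻¹' (Φ ⁻¹' A₂)) ∂ν₂
        ≤ ∫⁻ z, ENNReal.ofReal (Real.exp ((ε/4) * |c|)) * Pm (Prod.mk (z + 1) ⁻¹' A₂) ∂ν₂ :=
          lintegral_mono hpt
      _ = ENNReal.ofReal (Real.exp ((ε/4) * |c|)) * ∫⁻ z, Pm (Prod.mk (z + 1) ⁻¹' A₂) ∂ν₂ :=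
          lintegral_const_mul' _ _ ENNReal.ofReal_ne_top
  have step2 : ∫⁻ t, Pm (Prod.mk (t + 1) ⁻¹' A₂) ∂ν₂ ≤
      ENNReal.ofReal (Real.exp ((ε/2) * |(1:ℝ)|)) * (ν₂.prod Pm) A₂ := by
    rw [Measure.prod_apply hA₂, hν₂_def]
    exact laplace_shift (ε/4) (ε/2) 1 (by positivity) (by positivity) hmeas_h
  have hKle : ENNReal.ofReal (Real.exp ((ε/4) * |c|)) *
      ENNReal.ofReal (Real.exp ((ε/2) * |(1:ℝ)|)) ≤ ENNReal.ofReal (Real.exp ε) := by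
    rw [← ENNReal.ofReal_mul (Real.exp_nonneg _), ← Real.exp_add]
    apply ENNReal.ofReal_le_ofReal
    apply Real.exp_le_exp.2
    rw [abs_one]
    nlinarith
  calc (ν₂.prod Pm) {p : ℝ × (Fin (m+1) → ℝ) |
      (∀ i, i < j → q₁ i + p.2 i < T + p.1) ∧ q₁ j + p.2 j ≥ T + p.1 ∧
        (q₁ j + p.2 j - (T + p.1)) ∈ G}
      ≤ (ν₂.prod Pm) (Φ ⁻¹' A₂) := measure_mono hincl
    _ ≤ ENNReal.ofReal (Real.exp ((ε/4) * |c|)) *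
        ∫⁻ t, Pm (Prod.mk (t + 1) ⁻¹' A₂) ∂ν₂ := step1
    _ ≤ ENNReal.ofReal (Real.exp ((ε/4) * |c|)) *
        (ENNReal.ofReal (Real.exp ((ε/2) * |(1:ℝ)|)) * (ν₂.prod Pm) A₂) :=
          mul_le_mul_right step2 _
    _ = ENNReal.ofReal (Real.exp ((ε/4) * |c|)) *
        ENNReal.ofReal (Real.exp ((ε/2) * |(1:ℝ)|)) * (ν₂.prod Pm) A₂ := by rw [mul_assoc]
    _ ≤ ENNReal.ofReal (Real.exp ε) * (ν₂.prod Pm) A₂ := mul_le_mul_left hKle _
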